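/- For all β > 0 and h > 0, sinh(β h) - β h ≤ (β h / 3)(cosh(β h) - 1). -/

import Mathlib

open Real Set

lemma aux_nonneg_of_deriv (f f' : ℝ → ℝ) (hd : ∀ x, HasDerivAt f (f' x) x)
    (h0 : f 0 = 0) (hf' : ∀ x, 0 ≤ x → 0 ≤ f' x) : ∀ x, 0 ≤ x → 0 ≤ f x := by
  have hmono : MonotoneOn f (Ici 0) := by
    apply monotoneOn_of_deriv_nonneg (convex_Ici 0)
      (fun x _ => (hd x).continuousAt.continuousWithinAt)
    · intro x hx
      exact (hd x).differentiableAt.differentiableWithinAt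
    · intro x hx
      rw [(hd x).deriv]
      exact hf' x (le_of_lt (by simpa using hx))
  intro x hx
  have := hmono (Set.self_mem_Ici) hx hx
  simpa [h0] using this

lemma aux1 : ∀ x, 0 ≤ x → 0 ≤ x * Real.cosh x - Real.sinh x := by
  apply aux_nonneg_of_deriv _ (fun x => x * Real.sinh x)
  · intro x
    have h1 : HasDerivAt (fun x : ℝ => x * Real.cosh x) (1 * Real.cosh x + x * Real.sinh x) x :=
      (hasDerivAt_id x).mul (Real.hasDerivAt_cosh x)
    have := h1.sub (Real.hasDerivAt_sinh x)
    convert this using 1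
    · rfl
    · rfl
    · rfl
    · ring
  · simp
  · intro x hx
    exact mul_nonneg hx (Real.sinh_nonneg_iff.mpr hx)

lemma aux2 : ∀ x, 0 ≤ x → 0 ≤ x * Real.sinh x - 2 * Real.cosh x + 2 := by
  apply aux_nonneg_of_deriv _ (fun x => x * Real.cosh x - Real.sinh x)
  · intro x
    have h1 : HasDerivAt (fun x : ℝ => x * Real.sinh x) (1 * Real.sinh x + x * Real.cosh x) x :=
      (hasDerivAt_id x).mul (Real.hasDerivAt_sinh x)
    have h2 := (h1.sub ((Real.hasDerivAt_cosh x).const_mul 2)).add_const 2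
    convert h2 using 1
    · rfl
    · rfl
    · rfl
    · ring
  · simp
  · exact aux1

lemma aux3 : ∀ x, 0 ≤ x → 0 ≤ x * (Real.cosh x - 1) - 3 * (Real.sinh x - x) := by
  apply aux_nonneg_of_deriv _ (fun x => x * Real.sinh x - 2 * Real.cosh x + 2)
  · intro x
    have h1 : HasDerivAt (fun x : ℝ => x * (Real.cosh x - 1))
        (1 * (Real.cosh x - 1) + x * Real.sinh x) x :=
      (hasDerivAt_id x).mul ((Real.hasDerivAt_cosh x).sub_const 1)
    have h2 : HasDerivAt (fun x : ℝ => 3 * (Real.sinh x - x)) (3 * (Real.cosh x - 1)) x :=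
      (((Real.hasDerivAt_sinh x).sub (hasDerivAt_id x))).const_mul 3
    convert h1.sub h2 using 1
    · rfl
    · rfl
    · rfl
    · ring
  · simp
  · exact aux2

theorem stmt_7 (β h : ℝ) (hβ : 0 < β) (hh : 0 < h) :
    Real.sinh (β * h) - β * h ≤ (β * h / 3) * (Real.cosh (β * h) - 1) := by
  have := aux3 (β * h) (le_of_lt (mul_pos hβ hh))
  nlinarith [this]
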